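/- Let V be a finite dimensional real inner product space, let T : V → V be a self-adjoint positive semidefinite linear operator, and let x₀ ∈ V be such that T − x₀⊗x₀ is positive semidefinite. Then (1/2)(λ₂(T) + λ₁(T) − ‖x₀‖²) ≤ ‖T − x₀⊗x₀‖_op ≤ 2(λ₂(T) + λ₁(T) − ‖x₀‖²). -/

import Mathlib

open MeasureTheory
open scoped ENNReal RealInnerProductSpace Classical

noncomputable section

/-- The outer product `x xᵀ` of a vector in Euclidean space, as a matrix. -/
def outer {d : ℕ} (x : EuclideanSpace ℝ (Fin d)) : Matrix (Fin d) (Fin d) ℝ :=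
  Matrix.of fun i j => x i * x j

/-- The trace inner product `⟨A, B⟩ = Tr (A B)` on symmetric matrices. -/
def minner {d : ℕ} (A B : Matrix (Fin d) (Fin d) ℝ) : ℝ :=
  Matrix.trace (A * B)

/-- The Frobenius norm of a matrix. -/
def frobNorm {d : ℕ} (M : Matrix (Fin d) (Fin d) ℝ) : ℝ :=
  Real.sqrt (∑ i, ∑ j, (M i j) ^ 2)

/-- Entrywise integral of a matrix-valued function. -/
def mIntegral {d : ℕ} (μ : Measure (EuclideanSpace ℝ (Fin d)))
    (F : EuclideanSpace ℝ (Fin d) → Matrix (Fin d) (Fin d) ℝ) :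
    Matrix (Fin d) (Fin d) ℝ :=
  Matrix.of fun i j => ∫ x, F x i j ∂μ

/-- The fourth moment operator `T_μ (A) = ∫ ⟨A, xxᵀ⟩ xxᵀ dμ(x)`. -/
def fourthMomentOp {d : ℕ} (μ : Measure (EuclideanSpace ℝ (Fin d)))
    (A : Matrix (Fin d) (Fin d) ℝ) : Matrix (Fin d) (Fin d) ℝ :=
  mIntegral μ (fun x => minner A (outer x) • outer x)

/-- The second moment matrix `B = ∫ xxᵀ dμ(x)`. -/
def secondMoment {d : ℕ} (μ : Measure (EuclideanSpace ℝ (Fin d))) :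
    Matrix (Fin d) (Fin d) ℝ :=
  mIntegral μ outer

/-- `lam : ℕ → ℝ` lists the eigenvalues (with multiplicity) of the fourth moment operator
`T_μ`, viewed as an operator on the `d(d+1)/2`-dimensional inner product space of symmetric
matrices, in descending order, padded by `0` beyond index `d(d+1)/2`. -/
def IsEigenSeq {d : ℕ} (μ : Measure (EuclideanSpace ℝ (Fin d))) (lam : ℕ → ℝ) : Prop :=
  Antitone lam ∧ (∀ i, d * (d + 1) / 2 ≤ i → lam i = 0) ∧
  ∃ b : Fin (d * (d + 1) / 2) → Matrix (Fin d) (Fin d) ℝ,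
    (∀ i, (b i).IsSymm) ∧
    (∀ i j, minner (b i) (b j) = if i = j then 1 else 0) ∧
    (∀ A : Matrix (Fin d) (Fin d) ℝ, A.IsSymm → A ∈ Submodule.span ℝ (Set.range b)) ∧
    (∀ i : Fin (d * (d + 1) / 2), fourthMomentOp μ (b i) = lam i • b i)

/-- The second order separation parameter `s(μ)`. -/
def sep {d : ℕ} (μ : Measure (EuclideanSpace ℝ (Fin d))) : ℝ :=
  (1 / 2) * sSup { r : ℝ | ∃ μ₁ μ₂ : Measure (EuclideanSpace ℝ (Fin d)),
    IsProbabilityMeasure μ₁ ∧ IsProbabilityMeasure μ₂ ∧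
    μ = (2 : ℝ≥0∞)⁻¹ • μ₁ + (2 : ℝ≥0∞)⁻¹ • μ₂ ∧
    r = frobNorm (secondMoment μ₁ - secondMoment μ₂) }

/-- The standard Gaussian measure `N(0, I)` on `ℝ^d`. -/
def stdGaussian (d : ℕ) : Measure (EuclideanSpace ℝ (Fin d)) :=
  (Measure.pi fun _ : Fin d => ProbabilityTheory.gaussianReal 0 1).map
    (MeasurableEquiv.toLp 2 (Fin d → ℝ))

/-- The square root of a positive semidefinite matrix, as `Matrix.PosSemidef.sqrt` was defined
in the older Mathlib. -/
def posSemidefSqrtOld {n : Type*} [Fintype n] [DecidableEq n] {A : Matrix n n ℝ}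
    (hA : A.PosSemidef) : Matrix n n ℝ :=
  (hA.1.eigenvectorUnitary : Matrix n n ℝ) *
    Matrix.diagonal ((fun x : ℝ => Real.sqrt x) ∘ hA.1.eigenvalues) *
    (star hA.1.eigenvectorUnitary : Matrix n n ℝ)

/-- The centered Gaussian measure `N(0, B)` on `ℝ^d` with positive semidefinite
covariance matrix `B`, obtained as the pushforward of `N(0, I)` by `B^{1/2}`. -/
def gaussianCov {d : ℕ} (B : Matrix (Fin d) (Fin d) ℝ) :
    Measure (EuclideanSpace ℝ (Fin d)) :=
  if hB : B.PosSemidef then (stdGaussian d).map (fun x => Matrix.toEuclideanLin (posSemidefSqrtOld hB) x)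
  else 0

/-- The positive semidefinite square root `B^{1/2}` of a positive semidefinite matrix. -/
def psdSqrt {d : ℕ} (B : Matrix (Fin d) (Fin d) ℝ) : Matrix (Fin d) (Fin d) ℝ :=
  if hB : B.PosSemidef then posSemidefSqrtOld hB else 0

/-- The rank one operator `x₀ ⊗ x₀ : v ↦ ⟨v, x₀⟩ x₀` on an inner product space. -/
def rankOne {V : Type*} [NormedAddCommGroup V] [InnerProductSpace ℝ V] (x₀ : V) :
    V →ₗ[ℝ] V where
  toFun v := ⟪v, x₀⟫ • x₀
  map_add' a b := by simp [inner_add_left, add_smul]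
  map_smul' c a := by simp [inner_smul_left, smul_smul]

section AuxLemmas
variable {V : Type*} [NormedAddCommGroup V] [InnerProductSpace ℝ V] [FiniteDimensional ℝ V]

lemma psd_cs (S : V →ₗ[ℝ] V) (hS : S.IsSymmetric) (h : ∀ v, 0 ≤ ⟪S v, v⟫) (x y : V) :
    ⟪S x, y⟫ ^ 2 ≤ ⟪S x, x⟫ * ⟪S y, y⟫ := by
  have key : ∀ t : ℝ, 0 ≤ ⟪S y, y⟫ * (t * t) + (2 * ⟪S x, y⟫) * t + ⟪S x, x⟫ := by
    intro t
    have h1 := h (x + t • y)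
    have h2 : ⟪S y, x⟫ = ⟪S x, y⟫ := by
      rw [hS y x, real_inner_comm]
    simp only [map_add, _root_.map_smul, inner_add_left, inner_add_right, inner_smul_left,
      inner_smul_right, RCLike.ofReal_real_eq_id, id, starRingEnd_apply, star_trivial] at h1
    rw [h2] at h1; nlinarith [h1]
  have hd := discrim_le_zero key
  rw [discrim] at hd
  nlinarith [hd]

lemma inner_le_opnorm (S : V →ₗ[ℝ] V) (v : V) (hv : ‖v‖ = 1) :
    ⟪S v, v⟫ ≤ ‖LinearMap.toContinuousLinearMap S‖ := by
  have h1 : ⟪S v, v⟫ ≤ ‖S v‖ * ‖v‖ := real_inner_le_norm _ _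
  have h2 : ‖S v‖ ≤ ‖LinearMap.toContinuousLinearMap S‖ * ‖v‖ := by
    have := (LinearMap.toContinuousLinearMap S).le_opNorm v
    simpa using this
  rw [hv] at h1 h2
  simpa using h1.trans (by simpa using h2)

lemma opnorm_le_of_quad (S : V →ₗ[ℝ] V) (hS : S.IsSymmetric) (h : ∀ v, 0 ≤ ⟪S v, v⟫)
    (M : ℝ) (hM : 0 ≤ M) (hq : ∀ v, ⟪S v, v⟫ ≤ M * ‖v‖ ^ 2) :
    ‖LinearMap.toContinuousLinearMap S‖ ≤ M := by
  apply ContinuousLinearMap.opNorm_le_bound _ hM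
  intro v
  simp only [LinearMap.coe_toContinuousLinearMap']
  by_cases hz : S v = 0
  · simp [hz]; positivity
  · have hcs := psd_cs S hS h v (S v)
    have e1 : ⟪S v, S v⟫ = ‖S v‖ ^ 2 := real_inner_self_eq_norm_sq _
    have h2 := hq (S v)
    have h3 := hq v
    have h4 := h v
    have h5 := h (S v)
    have hn : (0:ℝ) < ‖S v‖ := norm_pos_iff.mpr hz
    have k0 : ⟪S v, v⟫ * ⟪S (S v), S v⟫ ≤ (M * ‖v‖ ^ 2) * (M * ‖S v‖ ^ 2) :=
      mul_le_mul h3 h2 h5 (by positivity)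
    have k1 : ‖S v‖ ^ 2 * ‖S v‖ ^ 2 ≤ (M * ‖v‖ ^ 2) * (M * ‖S v‖ ^ 2) := by
      nlinarith [hcs.trans k0]
    have k2 : ‖S v‖ ^ 2 ≤ M ^ 2 * ‖v‖ ^ 2 := by nlinarith [mul_pos hn hn]
    nlinarith [mul_nonneg hM (norm_nonneg v)]

lemma quad_repr (T : V →ₗ[ℝ] V) (hT : T.IsSymmetric)
    (lam : ℕ → ℝ) (b : Fin (Module.finrank ℝ V) → V) (hb : Orthonormal ℝ b)
    (hspan : Submodule.span ℝ (Set.range b) = ⊤)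
    (heig : ∀ i, T (b i) = lam i • b i) (v : V) :
    ⟪T v, v⟫ = ∑ i : Fin (Module.finrank ℝ V), lam i * ⟪b i, v⟫ ^ 2 ∧
      ‖v‖ ^ 2 = ∑ i : Fin (Module.finrank ℝ V), ⟪b i, v⟫ ^ 2 := by
  let B : OrthonormalBasis (Fin (Module.finrank ℝ V)) ℝ V :=
    OrthonormalBasis.mk hb (by rw [hspan])
  have hBc : ∀ i, B i = b i := fun i => congrFun (OrthonormalBasis.coe_mk hb _) i
  constructor
  · have h1 := B.sum_inner_mul_inner v (T v)
    have hc : ⟪T v, v⟫ = ⟪v, T v⟫ := real_inner_comm _ _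
    rw [hc, ← h1]
    apply Finset.sum_congr rfl
    intro i _
    rw [hBc]
    have h2 : ⟪b i, T v⟫ = lam i * ⟪b i, v⟫ := by
      rw [← hT (b i) v, heig i, real_inner_smul_left]
    rw [h2, real_inner_comm v (b i)]; ring
  · have h1 := B.sum_inner_mul_inner v v
    rw [← real_inner_self_eq_norm_sq, ← h1]
    apply Finset.sum_congr rfl
    intro i _
    rw [hBc, real_inner_comm v (b i)]; ring

lemma rayleigh_le_top (T : V →ₗ[ℝ] V) (hT : T.IsSymmetric)
    (lam : ℕ → ℝ) (hanti : Antitone lam)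
    (b : Fin (Module.finrank ℝ V) → V) (hb : Orthonormal ℝ b)
    (hspan : Submodule.span ℝ (Set.range b) = ⊤)
    (heig : ∀ i, T (b i) = lam i • b i) (v : V) :
    ⟪T v, v⟫ ≤ lam 0 * ‖v‖ ^ 2 := by
  obtain ⟨h1, h2⟩ := quad_repr T hT lam b hb hspan heig v
  rw [h1, h2, Finset.mul_sum]
  apply Finset.sum_le_sum
  intro i _
  have := hanti (Nat.zero_le (i : ℕ))
  nlinarith [sq_nonneg (⟪b i, v⟫ : ℝ)]

lemma rayleigh_le_second (T : V →ₗ[ℝ] V) (hT : T.IsSymmetric)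
    (lam : ℕ → ℝ) (hanti : Antitone lam) (hlam1 : 0 ≤ lam 1)
    (b : Fin (Module.finrank ℝ V) → V) (hb : Orthonormal ℝ b)
    (hspan : Submodule.span ℝ (Set.range b) = ⊤)
    (heig : ∀ i, T (b i) = lam i • b i)
    (hn : 0 < Module.finrank ℝ V) (v : V) (hv : ⟪b ⟨0, hn⟩, v⟫ = 0) :
    ⟪T v, v⟫ ≤ lam 1 * ‖v‖ ^ 2 := by
  obtain ⟨h1, h2⟩ := quad_repr T hT lam b hb hspan heig v
  rw [h1, h2, Finset.mul_sum]
  apply Finset.sum_le_sum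
  intro i _
  by_cases hi : i = ⟨0, hn⟩
  · subst hi; rw [hv]; simp
  · have hi1 : 1 ≤ (i : ℕ) := by
      rcases Nat.eq_zero_or_pos (i : ℕ) with h | h
      · exact absurd (Fin.ext h) hi
      · exact h
    have := hanti hi1
    nlinarith [sq_nonneg (⟪b i, v⟫ : ℝ)]

lemma inner_le_opnorm' (S : V →ₗ[ℝ] V) (v : V) :
    ⟪S v, v⟫ ≤ ‖LinearMap.toContinuousLinearMap S‖ * ‖v‖ ^ 2 := by
  have h1 : ⟪S v, v⟫ ≤ ‖S v‖ * ‖v‖ := real_inner_le_norm _ _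
  have h2 : ‖S v‖ ≤ ‖LinearMap.toContinuousLinearMap S‖ * ‖v‖ := by
    simpa using (LinearMap.toContinuousLinearMap S).le_opNorm v
  calc ⟪S v, v⟫ ≤ ‖S v‖ * ‖v‖ := h1
    _ ≤ (‖LinearMap.toContinuousLinearMap S‖ * ‖v‖) * ‖v‖ :=
        mul_le_mul_of_nonneg_right h2 (norm_nonneg v)
    _ = ‖LinearMap.toContinuousLinearMap S‖ * ‖v‖ ^ 2 := by ring

end AuxLemmas

set_option maxHeartbeats 1000000 in
/-- if `T` is positive semidefinite and `T - x₀ ⊗ x₀` is positive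
semidefinite, then `(1/2)(λ₂(T) + λ₁(T) - ‖x₀‖²) ≤ ‖T - x₀ ⊗ x₀‖_op ≤
2(λ₂(T) + λ₁(T) - ‖x₀‖²)`. -/
theorem opNorm_sub_rankOne_bounds
    {V : Type*} [NormedAddCommGroup V] [InnerProductSpace ℝ V] [FiniteDimensional ℝ V]
    (T : V →ₗ[ℝ] V) (hT : T.IsSymmetric) (hTpsd : ∀ v, 0 ≤ ⟪T v, v⟫)
    (x₀ : V) (hpsd : ∀ v, 0 ≤ ⟪T v - rankOne x₀ v, v⟫)
    -- `lam` lists the eigenvalues of `T` in descending order (padded with `0`):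
    (lam : ℕ → ℝ) (hanti : Antitone lam)
    (hpad : ∀ i, Module.finrank ℝ V ≤ i → lam i = 0)
    (b : Fin (Module.finrank ℝ V) → V) (hb : Orthonormal ℝ b)
    (hspan : Submodule.span ℝ (Set.range b) = ⊤)
    (heig : ∀ i : Fin (Module.finrank ℝ V), T (b i) = lam i • b i) :
    (1 / 2) * (lam 1 + lam 0 - ‖x₀‖ ^ 2) ≤
        ‖LinearMap.toContinuousLinearMap (T - rankOne x₀)‖ ∧
      ‖LinearMap.toContinuousLinearMap (T - rankOne x₀)‖ ≤
        2 * (lam 1 + lam 0 - ‖x₀‖ ^ 2) := by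
  set S : V →ₗ[ℝ] V := T - rankOne x₀ with hSdef
  have hSv : ∀ v, S v = T v - ⟪v, x₀⟫ • x₀ := by
    intro v
    rw [hSdef, LinearMap.sub_apply]
    rfl
  have hSinner2 : ∀ u v, ⟪S u, v⟫ = ⟪T u, v⟫ - ⟪u, x₀⟫ * ⟪x₀, v⟫ := by
    intro u v
    rw [hSv, inner_sub_left, real_inner_smul_left]
  have hSinner : ∀ v, ⟪S v, v⟫ = ⟪T v, v⟫ - ⟪v, x₀⟫ ^ 2 := by
    intro v
    rw [hSinner2, real_inner_comm x₀ v]; ring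
  have hSpsd : ∀ v, 0 ≤ ⟪S v, v⟫ := fun v => hpsd v
  have hSsymm : S.IsSymmetric := by
    intro u v
    have h1 : ⟪u, S v⟫ = ⟪S v, u⟫ := real_inner_comm _ _
    have h2 : ⟪T u, v⟫ = ⟪T v, u⟫ := by rw [hT u v, real_inner_comm]
    have h3 : ⟪u, x₀⟫ = ⟪x₀, u⟫ := real_inner_comm _ _
    have h4 : ⟪v, x₀⟫ = ⟪x₀, v⟫ := real_inner_comm _ _
    rw [h1, hSinner2, hSinner2, h2, h3, h4]; ring
  have hl1 : 0 ≤ lam 1 := by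
    have h0 := hpad (Module.finrank ℝ V + 1) (by omega)
    have := hanti (show 1 ≤ Module.finrank ℝ V + 1 by omega)
    linarith
  have hl0 : 0 ≤ lam 0 := le_trans hl1 (hanti (by omega))
  rcases Nat.eq_zero_or_pos (Module.finrank ℝ V) with hn0 | hn
  · have hsub : Subsingleton V := (Module.finrank_zero_iff (R := ℝ)).mp hn0
    have hx0 : x₀ = 0 := Subsingleton.elim _ _
    have hS0 : LinearMap.toContinuousLinearMap S = 0 := by
      apply ContinuousLinearMap.ext; intro v; exact Subsingleton.elim _ _
    have h0 : lam 0 = 0 := hpad 0 (by omega)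
    have h1 : lam 1 = 0 := hpad 1 (by omega)
    rw [hS0, h0, h1, hx0]
    norm_num
  -- main case
  set e : V := b ⟨0, hn⟩ with hedef
  have hne : ‖e‖ = 1 := hb.1 ⟨0, hn⟩
  have hee : ⟪e, e⟫ = 1 := by
    rw [real_inner_self_eq_norm_sq, hne]; norm_num
  have hTe : T e = lam 0 • e := by
    have := heig ⟨0, hn⟩
    simpa using this
  set α : ℝ := ⟪e, x₀⟫ with hadef
  have hTee : ⟪T e, e⟫ = lam 0 := by
    rw [hTe, real_inner_smul_left, hee]; ring
  have hA : ⟪S e, e⟫ = lam 0 - α ^ 2 := by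
    rw [hSinner, hTee]
  have hA0 : 0 ≤ lam 0 - α ^ 2 := by rw [← hA]; exact hSpsd e
  have hα : α ^ 2 ≤ ‖x₀‖ ^ 2 := by
    have h := abs_real_inner_le_norm e x₀
    have h1 : ‖e‖ = 1 := hb.1 ⟨0, hn⟩
    rw [h1, one_mul] at h
    nlinarith [abs_nonneg (⟪e, x₀⟫ : ℝ), sq_abs (⟪e, x₀⟫ : ℝ)]
  -- F3 : ‖x₀‖^2 ≤ lam 0
  have hF3 : ‖x₀‖ ^ 2 ≤ lam 0 := by
    have h1 := hSpsd x₀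
    rw [hSinner, real_inner_self_eq_norm_sq] at h1
    have h2 := rayleigh_le_top T hT lam hanti b hb hspan heig x₀
    by_cases hz : x₀ = 0
    · simp [hz, hl0]
    · have hxn : (0:ℝ) < ‖x₀‖ := norm_pos_iff.mpr hz
      have : (0:ℝ) < ‖x₀‖ ^ 2 := by positivity
      nlinarith
  -- F4 : ‖x₀‖^2 - α^2 ≤ lam 1
  have hF4 : ‖x₀‖ ^ 2 - α ^ 2 ≤ lam 1 := by
    set u : V := x₀ - α • e with hudef
    have heu : ⟪e, u⟫ = 0 := by
      rw [hudef, inner_sub_right, real_inner_smul_right, hee]; simp [hadef]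
    have hux : ⟪u, x₀⟫ = ‖x₀‖ ^ 2 - α ^ 2 := by
      rw [hudef, inner_sub_left, real_inner_smul_left, real_inner_self_eq_norm_sq, hadef]
      ring
    have huu : ‖u‖ ^ 2 = ‖x₀‖ ^ 2 - α ^ 2 := by
      have hiu : ⟪u, u⟫ = ‖x₀‖ ^ 2 - α ^ 2 := by
        rw [hudef]
        simp only [inner_sub_left, inner_sub_right, real_inner_smul_left,
          real_inner_smul_right]
        rw [hee, real_inner_self_eq_norm_sq, real_inner_comm e x₀, hadef]
        ring
      rw [← real_inner_self_eq_norm_sq, hiu]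
    have hp0 : 0 ≤ ‖x₀‖ ^ 2 - α ^ 2 := by rw [← huu]; exact sq_nonneg ‖u‖
    have h1 := hSpsd u
    rw [hSinner, hux] at h1
    have h2 := rayleigh_le_second T hT lam hanti hl1 b hb hspan heig hn u heu
    rw [huu] at h2
    rcases eq_or_lt_of_le hp0 with h | h
    · linarith
    · nlinarith
  -- upper bound
  set M : ℝ := 2 * (lam 1 + lam 0 - ‖x₀‖ ^ 2) with hMdef
  have hM0 : 0 ≤ M := by rw [hMdef]; linarith
  have hquad : ∀ v, ⟪S v, v⟫ ≤ M * ‖v‖ ^ 2 := by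
    intro v
    set c : ℝ := ⟪e, v⟫ with hcdef
    set w : V := v - c • e with hwdef
    have hew : ⟪e, w⟫ = 0 := by
      rw [hwdef, inner_sub_right, real_inner_smul_right, hee]; simp [hcdef]
    have hwe : ⟪w, e⟫ = 0 := by rw [real_inner_comm]; exact hew
    have hveq : v = c • e + w := by rw [hwdef]; abel
    have hnv : ‖v‖ ^ 2 = c ^ 2 + ‖w‖ ^ 2 := by
      have hiv : ⟪v, v⟫ = c ^ 2 + ‖w‖ ^ 2 := by
        nth_rewrite 1 [hveq]
        nth_rewrite 1 [hveq]
        simp only [inner_add_left, inner_add_right, real_inner_smul_left,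
          real_inner_smul_right]
        rw [hee, hew, hwe, real_inner_self_eq_norm_sq]
        ring
      rw [← real_inner_self_eq_norm_sq, hiv]
    have hsym' : ⟪S w, e⟫ = ⟪S e, w⟫ := by
      rw [hSsymm w e, real_inner_comm]
    have hexp : ⟪S v, v⟫ = c ^ 2 * ⟪S e, e⟫ + 2 * c * ⟪S e, w⟫ + ⟪S w, w⟫ := by
      nth_rewrite 1 [hveq]
      nth_rewrite 1 [hveq]
      simp only [map_add, _root_.map_smul, inner_add_left, inner_add_right,
        real_inner_smul_left, real_inner_smul_right]
      rw [hsym']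
      ring
    have hCle : ⟪S w, w⟫ ≤ lam 1 * ‖w‖ ^ 2 := by
      have h1 := rayleigh_le_second T hT lam hanti hl1 b hb hspan heig hn w hew
      have h2 := hSinner w
      nlinarith [sq_nonneg (⟪w, x₀⟫ : ℝ)]
    have hC0 : 0 ≤ ⟪S w, w⟫ := hSpsd w
    have hcs := psd_cs S hSsymm hSpsd e w
    have hX0 : (0:ℝ) ≤ c ^ 2 * lam 1 + (lam 0 - α ^ 2) * ‖w‖ ^ 2 := by positivity
    have hkey : 2 * c * ⟪S e, w⟫ ≤ c ^ 2 * lam 1 + (lam 0 - α ^ 2) * ‖w‖ ^ 2 := by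
      have s1 : (2 * c * ⟪S e, w⟫) ^ 2 ≤ 4 * c ^ 2 * (⟪S e, e⟫ * ⟪S w, w⟫) := by
        nlinarith [mul_le_mul_of_nonneg_left hcs (show (0:ℝ) ≤ 4 * c ^ 2 by positivity)]
      have s2 : ⟪S e, e⟫ * ⟪S w, w⟫ ≤ (lam 0 - α ^ 2) * (lam 1 * ‖w‖ ^ 2) := by
        rw [hA]
        exact mul_le_mul_of_nonneg_left hCle hA0
      have s3 : 4 * c ^ 2 * ((lam 0 - α ^ 2) * (lam 1 * ‖w‖ ^ 2)) ≤
          (c ^ 2 * lam 1 + (lam 0 - α ^ 2) * ‖w‖ ^ 2) ^ 2 := by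
        nlinarith [sq_nonneg (c ^ 2 * lam 1 - (lam 0 - α ^ 2) * ‖w‖ ^ 2)]
      have s4 : (2 * c * ⟪S e, w⟫) ^ 2 ≤
          (c ^ 2 * lam 1 + (lam 0 - α ^ 2) * ‖w‖ ^ 2) ^ 2 := by
        calc (2 * c * ⟪S e, w⟫) ^ 2 ≤ 4 * c ^ 2 * (⟪S e, e⟫ * ⟪S w, w⟫) := s1
          _ ≤ 4 * c ^ 2 * ((lam 0 - α ^ 2) * (lam 1 * ‖w‖ ^ 2)) := by
              exact mul_le_mul_of_nonneg_left s2 (by positivity)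
          _ ≤ _ := s3
      nlinarith [s4, hX0]
    have hbound : ⟪S v, v⟫ ≤ ((lam 0 - α ^ 2) + lam 1) * ‖v‖ ^ 2 := by
      rw [hexp, hA, hnv]
      nlinarith [hkey, hCle]
    have hKM : (lam 0 - α ^ 2) + lam 1 ≤ M := by
      rw [hMdef]; linarith
    calc ⟪S v, v⟫ ≤ ((lam 0 - α ^ 2) + lam 1) * ‖v‖ ^ 2 := hbound
      _ ≤ M * ‖v‖ ^ 2 := mul_le_mul_of_nonneg_right hKM (by positivity)
  have hupper := opnorm_le_of_quad S hSsymm hSpsd M hM0 hquad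
  -- lower bound
  have hL1 : lam 0 - ‖x₀‖ ^ 2 ≤ ‖LinearMap.toContinuousLinearMap S‖ := by
    have h1 := inner_le_opnorm S e (hb.1 ⟨0, hn⟩)
    rw [hA] at h1
    linarith
  have hL2 : lam 1 ≤ ‖LinearMap.toContinuousLinearMap S‖ := by
    rcases Nat.lt_or_ge (Module.finrank ℝ V) 2 with h2 | h2
    · have : lam 1 = 0 := hpad 1 (by omega)
      rw [this]; exact norm_nonneg _
    · set f : V := b ⟨1, by omega⟩ with hfdef
      have hnf : ‖f‖ = 1 := hb.1 ⟨1, by omega⟩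
      have hff : ⟪f, f⟫ = 1 := by
        rw [real_inner_self_eq_norm_sq, hnf]; norm_num
      have hef : ⟪e, f⟫ = 0 := hb.2 (by simp [Fin.ext_iff])
      have hfe : ⟪f, e⟫ = 0 := by rw [real_inner_comm]; exact hef
      have hTf : T f = lam 1 • f := by
        have := heig ⟨1, by omega⟩
        simpa using this
      set c0 : ℝ := ⟪e, x₀⟫ with hc0def
      set c1 : ℝ := ⟪f, x₀⟫ with hc1def
      by_cases hz : c0 = 0 ∧ c1 = 0
      · have h1 := inner_le_opnorm S f (hb.1 ⟨1, by omega⟩)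
        rw [hSinner] at h1
        have h3 : ⟪T f, f⟫ = lam 1 := by
          rw [hTf, real_inner_smul_left, hff]; ring
        have hfx : (⟪f, x₀⟫ : ℝ) = 0 := by rw [← hc1def]; exact hz.2
        rw [h3, hfx] at h1
        simpa using h1
      · set v : V := c1 • e - c0 • f with hvdef
        have hvx : ⟪v, x₀⟫ = 0 := by
          rw [hvdef, inner_sub_left, real_inner_smul_left, real_inner_smul_left,
            hc0def, hc1def]
          ring
        have hnv : ‖v‖ ^ 2 = c1 ^ 2 + c0 ^ 2 := by
          have hiv : ⟪v, v⟫ = c1 ^ 2 + c0 ^ 2 := by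
            rw [hvdef]
            simp only [inner_sub_left, inner_sub_right, real_inner_smul_left,
              real_inner_smul_right]
            rw [hee, hff, hef, hfe]
            ring
          rw [← real_inner_self_eq_norm_sq, hiv]
        have hnvpos : 0 < ‖v‖ ^ 2 := by
          rw [hnv]
          rcases not_and_or.mp hz with h | h
          · have : c0 ^ 2 > 0 := sq_pos_of_ne_zero h
            nlinarith [sq_nonneg c1]
          · have : c1 ^ 2 > 0 := sq_pos_of_ne_zero h
            nlinarith [sq_nonneg c0]
        have hTv : ⟪T v, v⟫ = lam 0 * c1 ^ 2 + lam 1 * c0 ^ 2 := by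
          rw [hvdef, map_sub, _root_.map_smul, _root_.map_smul, hTe, hTf]
          rw [inner_sub_left, inner_sub_right, inner_sub_right]
          simp only [real_inner_smul_left, real_inner_smul_right, smul_smul]
          rw [hee, hff, hef, hfe]
          ring
        have hSvv : ⟪S v, v⟫ = lam 0 * c1 ^ 2 + lam 1 * c0 ^ 2 := by
          rw [hSinner, hTv, hvx]; ring
        have h1 : ⟪S v, v⟫ ≤ ‖LinearMap.toContinuousLinearMap S‖ * ‖v‖ ^ 2 :=
          inner_le_opnorm' S v
        have h2 : lam 1 * ‖v‖ ^ 2 ≤ ⟪S v, v⟫ := by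
          rw [hSvv, hnv]
          have : lam 1 ≤ lam 0 := hanti (by omega)
          nlinarith [sq_nonneg c1]
        exact le_of_mul_le_mul_right (h2.trans h1) hnvpos
  constructor
  · linarith
  · exact hupper


end
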